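/- For every integer n ≥ 2 and all natural numbers k, l such that либо l < k or k + l is odd, one has ∫_{−1}^{1} P_k^{n+1}(t) · P_l^n(t) · (1−t²)^{(n−2)/2} dt = 0. -/

import Mathlib

open Polynomial MeasureTheory intervalIntegral

/-- The Legendre polynomial `P_k^n` of dimension `n` and degree `k`, defined on `(-1,1)`
via Rodrigues' formula. -/
noncomputable def legendreP (n k : ℕ) (t : ℝ) : ℝ :=
  ((-1 : ℝ) ^ k / (2 ^ k * (ascPochhammer ℝ k).eval (((n : ℝ) - 1) / 2))) *
    (1 - t ^ 2) ^ (-(((n : ℝ) - 3) / 2)) *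
    iteratedDeriv k (fun s : ℝ => (1 - s ^ 2) ^ (((n : ℝ) - 3) / 2 + (k : ℝ))) t

/-- Auxiliary polynomial sequence: the `i`-th derivative of `(1-s²)^c` equals
`(1-t²)^(c-i) * (legQ c i).eval t`. -/
noncomputable def legQ (c : ℝ) : ℕ → ℝ[X]
  | 0 => 1
  | (i + 1) => Polynomial.C ((c - i) * (-2)) * Polynomial.X * legQ c i
      + (1 - Polynomial.X ^ 2) * (legQ c i).derivative

lemma legQ_natDegree_le (c : ℝ) (i : ℕ) : (legQ c i).natDegree ≤ i := by
  induction i with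
  | zero => simp [legQ]
  | succ i ih =>
      rw [legQ]
      refine (Polynomial.natDegree_add_le _ _).trans (max_le ?_ ?_)
      · refine (Polynomial.natDegree_mul_le).trans ?_
        have h1 : (Polynomial.C ((c - (i:ℝ)) * (-2)) * Polynomial.X).natDegree ≤ 1 :=
          (Polynomial.natDegree_C_mul_le _ _).trans Polynomial.natDegree_X_le
        omega
      · by_cases hQ : (legQ c i).derivative = 0
        · simp [hQ]
        · have hQ0 : (legQ c i).natDegree ≠ 0 := by
            intro h0
            obtain ⟨a, ha⟩ := Polynomial.natDegree_eq_zero.mp h0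
            exact hQ (by rw [← ha]; simp)
          have hlt := Polynomial.natDegree_derivative_lt hQ0
          refine (Polynomial.natDegree_mul_le).trans ?_
          have h2 : (1 - Polynomial.X ^ 2 : ℝ[X]).natDegree ≤ 2 := by
            refine (Polynomial.natDegree_sub_le _ _).trans ?_
            simp
          omega

lemma rpow_sub_one' {x c : ℝ} (h : x ≠ 0 ∨ 1 ≤ c) : x ^ c = x ^ (c - 1) * x := by
  rcases eq_or_ne x 0 with rfl | hx
  · have hc : c ≠ 0 := by
      rcases h with h | h
      · exact absurd rfl h
      · linarith
    rw [Real.zero_rpow hc, mul_zero]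
  · rw [← Real.rpow_add_one hx (c - 1), sub_add_cancel]

lemma hasDerivAt_G (d : ℝ) (p : ℝ[X]) {t : ℝ} (h : (1 - t ^ 2) ≠ 0 ∨ 1 ≤ d) :
    HasDerivAt (fun s : ℝ => (1 - s ^ 2) ^ d * p.eval s)
      ((1 - t ^ 2) ^ (d - 1) *
        ((d * (-2)) * t * p.eval t + (1 - t ^ 2) * p.derivative.eval t)) t := by
  have hq : HasDerivAt (fun s : ℝ => 1 - s ^ 2) (-(2 * t)) t := by
    simpa using (hasDerivAt_pow 2 t).const_sub 1
  have h1 : HasDerivAt (fun s : ℝ => (1 - s ^ 2) ^ d)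
      (-(2 * t) * d * (1 - t ^ 2) ^ (d - 1)) t := hq.rpow_const h
  have h2 : HasDerivAt (fun s : ℝ => (1 - s ^ 2) ^ d * p.eval s)
      (-(2 * t) * d * (1 - t ^ 2) ^ (d - 1) * p.eval t + (1 - t ^ 2) ^ d * p.derivative.eval t) t :=
    h1.mul (p.hasDerivAt t)
  convert h2 using 1
  rw [rpow_sub_one' h]
  ring

lemma iteratedDeriv_rpow_global (c : ℝ) (i : ℕ) (hi : (i : ℝ) ≤ c) (t : ℝ) :
    iteratedDeriv i (fun s : ℝ => (1 - s ^ 2) ^ c) t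
      = (1 - t ^ 2) ^ (c - i) * (legQ c i).eval t := by
  induction i generalizing t with
  | zero => simp [legQ]
  | succ i ih =>
      have hi' : (i : ℝ) ≤ c := by push_cast at hi ⊢; linarith
      have hfun : iteratedDeriv i (fun s : ℝ => (1 - s ^ 2) ^ c)
          = fun t => (1 - t ^ 2) ^ (c - i) * (legQ c i).eval t := funext (ih hi')
      rw [iteratedDeriv_succ, hfun]
      have hd : (1 : ℝ) ≤ c - i := by push_cast at hi; linarith
      rw [(hasDerivAt_G (c - i) (legQ c i) (Or.inr hd)).deriv]
      rw [show legQ c (i + 1) = Polynomial.C ((c - i) * (-2)) * Polynomial.X * legQ c i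
            + (1 - Polynomial.X ^ 2) * (legQ c i).derivative from rfl]
      push_cast
      simp only [Polynomial.eval_add, Polynomial.eval_mul, Polynomial.eval_C,
        Polynomial.eval_X, Polynomial.eval_sub, Polynomial.eval_one, Polynomial.eval_pow]
      ring_nf

lemma iteratedDeriv_rpow_local (c : ℝ) (i : ℕ) :
    ∀ t ∈ Set.Ioo (-1 : ℝ) 1,
      iteratedDeriv i (fun s : ℝ => (1 - s ^ 2) ^ c) t
        = (1 - t ^ 2) ^ (c - i) * (legQ c i).eval t := by
  induction i with
  | zero => intro t ht; simp [legQ]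
  | succ i ih =>
      intro t ht
      have hpos : (0 : ℝ) < 1 - t ^ 2 := by
        obtain ⟨h1, h2⟩ := ht
        nlinarith
      have hev : iteratedDeriv i (fun s : ℝ => (1 - s ^ 2) ^ c)
          =ᶠ[nhds t] fun s => (1 - s ^ 2) ^ (c - i) * (legQ c i).eval s := by
        filter_upwards [isOpen_Ioo.mem_nhds ht] with s hs using ih s hs
      rw [iteratedDeriv_succ, hev.deriv_eq]
      rw [(hasDerivAt_G (c - i) (legQ c i) (Or.inl hpos.ne')).deriv]
      rw [show legQ c (i + 1) = Polynomial.C ((c - i) * (-2)) * Polynomial.X * legQ c i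
            + (1 - Polynomial.X ^ 2) * (legQ c i).derivative from rfl]
      push_cast
      simp only [Polynomial.eval_add, Polynomial.eval_mul, Polynomial.eval_C,
        Polynomial.eval_X, Polynomial.eval_sub, Polynomial.eval_one, Polynomial.eval_pow]
      ring_nf

lemma continuous_G (d : ℝ) (hd : 0 ≤ d) (p : ℝ[X]) :
    Continuous (fun t : ℝ => (1 - t ^ 2) ^ d * p.eval t) := by
  have h1 : Continuous (fun t : ℝ => (1 - t ^ 2) ^ d) :=
    (Real.continuous_rpow_const hd).comp (by continuity)
  exact h1.mul p.continuous_aeval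

/-- One integration by parts step. -/
lemma parts_step (α : ℝ) (hα : 0 ≤ α) (k i : ℕ) (hi : i + 1 ≤ k) (S : ℝ[X]) :
    ∫ t in (-1 : ℝ)..1,
        S.eval t * ((1 - t ^ 2) ^ (α + k - (i + 1 : ℕ)) * (legQ (α + k) (i + 1)).eval t)
      = - ∫ t in (-1 : ℝ)..1,
        S.derivative.eval t * ((1 - t ^ 2) ^ (α + k - i) * (legQ (α + k) i).eval t) := by
  have hik : (i : ℝ) + 1 ≤ (k : ℝ) := by exact_mod_cast hi
  have hd : (1 : ℝ) ≤ α + k - i := by linarith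
  have hu : ∀ x ∈ Set.uIcc (-1 : ℝ) 1, HasDerivAt (fun t => S.eval t) (S.derivative.eval x) x :=
    fun x _ => S.hasDerivAt x
  have hv : ∀ x ∈ Set.uIcc (-1 : ℝ) 1,
      HasDerivAt (fun t : ℝ => (1 - t ^ 2) ^ (α + k - i) * (legQ (α + k) i).eval t)
        ((1 - x ^ 2) ^ (α + k - (i + 1 : ℕ)) * (legQ (α + k) (i + 1)).eval x) x := by
    intro x _
    have := hasDerivAt_G (α + k - i) (legQ (α + k) i) (t := x) (Or.inr hd)
    convert this using 1
    rw [show legQ (α + k) (i + 1) = Polynomial.C ((α + k - i) * (-2)) * Polynomial.X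
          * legQ (α + k) i + (1 - Polynomial.X ^ 2) * (legQ (α + k) i).derivative from rfl]
    push_cast
    simp only [Polynomial.eval_add, Polynomial.eval_mul, Polynomial.eval_C,
      Polynomial.eval_X, Polynomial.eval_sub, Polynomial.eval_one, Polynomial.eval_pow]
    ring_nf
  have hu' : IntervalIntegrable (fun t => S.derivative.eval t) volume (-1 : ℝ) 1 :=
    (S.derivative.continuous_aeval).intervalIntegrable _ _
  have hv' : IntervalIntegrable
      (fun x : ℝ => (1 - x ^ 2) ^ (α + k - (i + 1 : ℕ)) * (legQ (α + k) (i + 1)).eval x)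
      volume (-1 : ℝ) 1 := by
    refine (continuous_G _ ?_ _).intervalIntegrable _ _
    push_cast; linarith
  have H := integral_mul_deriv_eq_deriv_mul hu hv hu' hv'
  have hb : ∀ x : ℝ, x ^ 2 = 1 →
      (1 - x ^ 2) ^ (α + k - i) * (legQ (α + k) i).eval x = 0 := by
    intro x hx
    rw [hx, sub_self, Real.zero_rpow (by linarith), zero_mul]
  rw [H, hb 1 (by norm_num), hb (-1) (by norm_num), mul_zero, mul_zero, sub_zero, zero_sub]

lemma main_zero (α : ℝ) (hα : 0 ≤ α) (k : ℕ) (R : ℝ[X]) (hR : R.natDegree < k) :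
    ∫ t in (-1 : ℝ)..1,
        R.eval t * ((1 - t ^ 2) ^ (α + k - (k : ℕ)) * (legQ (α + k) k).eval t) = 0 := by
  have key : ∀ j ≤ k, ∫ t in (-1 : ℝ)..1,
      ((Polynomial.derivative^[k - j] R).eval t)
        * ((1 - t ^ 2) ^ (α + k - (j : ℕ)) * (legQ (α + k) j).eval t) = 0 := by
    intro j
    induction j with
    | zero =>
        intro _
        rw [Nat.sub_zero]
        have h0 : Polynomial.derivative^[k] R = 0 := Polynomial.iterate_derivative_eq_zero hR
        simp [h0]
    | succ j ih =>
        intro hj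
        have hj' : j ≤ k := by omega
        rw [show k - j = (k - (j + 1)) + 1 by omega] at ih
        have := parts_step α hα k j hj (Polynomial.derivative^[k - (j + 1)] R)
        rw [this]
        rw [show Polynomial.derivative (Polynomial.derivative^[k - (j + 1)] R)
              = Polynomial.derivative^[k - (j + 1) + 1] R from
            (Function.iterate_succ_apply' _ _ _).symm]
        rw [ih hj', neg_zero]
  have := key k le_rfl
  simpa using this

lemma legendreP_neg (m k : ℕ) (t : ℝ) :
    legendreP m k (-t) = (-1 : ℝ) ^ k * legendreP m k t := by
  set f : ℝ → ℝ := fun s => (1 - s ^ 2) ^ (((m : ℝ) - 3) / 2 + (k : ℝ)) with hf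
  have hfe : (fun x : ℝ => f (-x)) = f := by
    funext x; simp [hf, neg_sq]
  have h := iteratedDeriv_comp_neg k f (-t)
  rw [hfe, neg_neg] at h
  unfold legendreP
  rw [h]
  simp only [neg_sq, smul_eq_mul]
  ring

/-- if `l < k` or `k + l` is odd, then
`∫_{−1}^{1} P_k^{n+1}(t) P_l^n(t) (1−t²)^{(n−2)/2} dt = 0`. -/
theorem legendre_orthogonality (n : ℕ) (hn : 2 ≤ n) (k l : ℕ)
    (h : l < k ∨ Odd (k + l)) :
    ∫ t in (-1 : ℝ)..1,
        legendreP (n + 1) k t * legendreP n l t * (1 - t ^ 2) ^ (((n : ℝ) - 2) / 2) = 0 := by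
  rcases h with hlk | hodd
  · -- case l < k : integration by parts
    set α : ℝ := ((n : ℝ) - 2) / 2 with hα_def
    set β : ℝ := ((n : ℝ) - 3) / 2 with hβ_def
    have hn2 : (2 : ℝ) ≤ (n : ℝ) := by exact_mod_cast hn
    have hα : 0 ≤ α := by rw [hα_def]; linarith
    set c1 : ℝ := (-1 : ℝ) ^ k / (2 ^ k * (ascPochhammer ℝ k).eval ((((n + 1 : ℕ) : ℝ) - 1) / 2))
      with hc1
    set c2 : ℝ := (-1 : ℝ) ^ l / (2 ^ l * (ascPochhammer ℝ l).eval (((n : ℝ) - 1) / 2)) with hc2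
    set R : ℝ[X] := legQ (β + l) l with hR_def
    have hcast : (((n + 1 : ℕ) : ℝ) - 3) / 2 = α := by rw [hα_def]; push_cast; ring
    have hcong : ∫ t in (-1 : ℝ)..1,
        legendreP (n + 1) k t * legendreP n l t * (1 - t ^ 2) ^ (((n : ℝ) - 2) / 2)
        = ∫ t in (-1 : ℝ)..1, (c1 * c2) *
            (R.eval t * ((1 - t ^ 2) ^ (α + k - (k : ℕ)) * (legQ (α + k) k).eval t)) := by
      refine intervalIntegral.integral_congr_ae ?_
      have h1 : ∀ᵐ x : ℝ ∂volume, x ∉ ({1} : Set ℝ) :=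
        measure_eq_zero_iff_ae_notMem.mp (measure_singleton 1)
      filter_upwards [h1] with t ht1 htI
      rw [Set.uIoc_of_le (by norm_num : (-1 : ℝ) ≤ 1)] at htI
      have htIoo : t ∈ Set.Ioo (-1 : ℝ) 1 :=
        ⟨htI.1, lt_of_le_of_ne htI.2 (by simpa using ht1)⟩
      have hpos : (0 : ℝ) < 1 - t ^ 2 := by
        obtain ⟨ha, hb⟩ := htIoo; nlinarith
      unfold legendreP
      rw [hcast]
      rw [iteratedDeriv_rpow_global (α + k) k (by linarith) t]
      rw [iteratedDeriv_rpow_local (β + l) l t htIoo]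
      rw [show α + (k : ℝ) - (k : ℝ) = α by ring, show β + (l : ℝ) - (l : ℝ) = β by ring]
      rw [Real.rpow_neg hpos.le, Real.rpow_neg hpos.le]
      have hAne : (1 - t ^ 2) ^ α ≠ 0 := (Real.rpow_pos_of_pos hpos α).ne'
      have hBne : (1 - t ^ 2) ^ β ≠ 0 := (Real.rpow_pos_of_pos hpos β).ne'
      rw [← hc1, ← hc2, ← hR_def, hα_def]
      push_cast
      field_simp
      ring
    rw [hcong, intervalIntegral.integral_const_mul]
    rw [main_zero α hα k R (lt_of_le_of_lt (legQ_natDegree_le _ _) hlk), mul_zero]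
  · -- parity case
    have hF : ∀ t : ℝ,
        legendreP (n + 1) k (-t) * legendreP n l (-t) * (1 - (-t) ^ 2) ^ (((n : ℝ) - 2) / 2)
          = -(legendreP (n + 1) k t * legendreP n l t * (1 - t ^ 2) ^ (((n : ℝ) - 2) / 2)) := by
      intro t
      rw [legendreP_neg, legendreP_neg, neg_sq]
      have hsign : (-1 : ℝ) ^ k * (-1 : ℝ) ^ l = -1 := by
        rw [← pow_add]; exact Odd.neg_one_pow hodd
      calc ((-1 : ℝ) ^ k * legendreP (n + 1) k t) * ((-1 : ℝ) ^ l * legendreP n l t)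
            * (1 - t ^ 2) ^ (((n : ℝ) - 2) / 2)
          = ((-1 : ℝ) ^ k * (-1 : ℝ) ^ l) * (legendreP (n + 1) k t * legendreP n l t
            * (1 - t ^ 2) ^ (((n : ℝ) - 2) / 2)) := by ring
        _ = _ := by rw [hsign]; ring
    have h1 : (∫ t in (-1 : ℝ)..1,
        legendreP (n + 1) k (-t) * legendreP n l (-t) * (1 - (-t) ^ 2) ^ (((n : ℝ) - 2) / 2))
        = ∫ t in (-1 : ℝ)..1,
        legendreP (n + 1) k t * legendreP n l t * (1 - t ^ 2) ^ (((n : ℝ) - 2) / 2) := by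
      rw [intervalIntegral.integral_comp_neg (fun t => legendreP (n + 1) k t * legendreP n l t
        * (1 - t ^ 2) ^ (((n : ℝ) - 2) / 2))]
      norm_num
    have h2 : (∫ t in (-1 : ℝ)..1,
        legendreP (n + 1) k (-t) * legendreP n l (-t) * (1 - (-t) ^ 2) ^ (((n : ℝ) - 2) / 2))
        = - ∫ t in (-1 : ℝ)..1,
        legendreP (n + 1) k t * legendreP n l t * (1 - t ^ 2) ^ (((n : ℝ) - 2) / 2) := by
      simp_rw [hF]
      exact intervalIntegral.integral_neg
    rw [h2] at h1
    linarith
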